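/- (Proposition on Marcinkiewicz–Zygmund type SLLN) Let p > 1, set r = min{p, 2}, and let (ξ_n)_{n≥1} be a sequence of real random variables with sup_{n≥1} τ_{φ_p}(ξ_n) < ∞. Suppose that for every natural number n, τ_{φ_p}(∑_{i=1}^n ξ_i)^r ≤ ∑_{i=1}^n τ_{φ_p}(ξ_i)^r. Then for every s with 0 < s < r, n^{−1/s} ∑_{i=1}^n ξ_i converges to 0 almost surely as n → ∞. -/

import Mathlib

open MeasureTheory Real Filter

/-- The quadratic `N`-function `φ_p`: `φ_p(x) = x²/2` for `|x| ≤ 1` and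
`φ_p(x) = (1/p)|x|^p - 1/p + 1/2` for `|x| > 1`. -/
noncomputable def phi (p : ℝ) (x : ℝ) : ℝ :=
  if |x| ≤ 1 then x ^ 2 / 2 else (1 / p) * |x| ^ p - 1 / p + 1 / 2

/-- The set of admissible constants in the definition of the `φ`-subgaussian standard:
`{a ≥ 0 : ∀ λ, ln E exp(λξ) ≤ φ(aλ)}` (the exponentiated form of the inequality also
encodes finiteness of `E exp(λξ)`). -/
def subSet {Ω : Type*} [MeasurableSpace Ω] (μ : Measure Ω) (φ : ℝ → ℝ) (ξ : Ω → ℝ) :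
    Set ℝ :=
  {a | 0 ≤ a ∧ ∀ l : ℝ,
    ∫⁻ ω, ENNReal.ofReal (Real.exp (l * ξ ω)) ∂μ ≤ ENNReal.ofReal (Real.exp (φ (a * l)))}

/-- The `φ`-subgaussian standard (norm) `τ_φ(ξ)`. -/
noncomputable def tau {Ω : Type*} [MeasurableSpace Ω] (μ : Measure Ω) (φ : ℝ → ℝ)
    (ξ : Ω → ℝ) : ℝ :=
  sInf (subSet μ φ ξ)

lemma phi_mono {p : ℝ} (hp : 1 < p) {x y : ℝ} (h : |x| ≤ |y|) : phi p x ≤ phi p y := by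
  have hp0 : 0 < p := by linarith
  unfold phi
  rcases le_or_gt |y| 1 with hy | hy
  · rw [if_pos (h.trans hy), if_pos hy]
    have : x ^ 2 ≤ y ^ 2 := by
      rw [← sq_abs x, ← sq_abs y]; exact pow_le_pow_left₀ (abs_nonneg x) h 2
    linarith
  · rw [if_neg (not_le.2 hy)]
    rcases le_or_gt |x| 1 with hx | hx
    · rw [if_pos hx]
      have h1 : (1:ℝ) ≤ |y| ^ p := Real.one_le_rpow hy.le hp0.le
      have h2 : x ^ 2 ≤ 1 := by rw [← sq_abs x]; nlinarith [abs_nonneg x]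
      have h3 : (0:ℝ) < 1/p := by positivity
      nlinarith
    · rw [if_neg (not_le.2 hx)]
      have : |x| ^ p ≤ |y| ^ p := Real.rpow_le_rpow (abs_nonneg x) h hp0.le
      have h3 : (0:ℝ) < 1/p := by positivity
      nlinarith

lemma phi_abs (p x : ℝ) : phi p |x| = phi p x := by
  simp [phi, abs_abs, sq_abs]

lemma phi_one (p : ℝ) : phi p 1 = 1/2 := by norm_num [phi]

section Aux

variable {Ω : Type*} [MeasurableSpace Ω] {μ : Measure Ω} {p : ℝ} {ξ : Ω → ℝ}

lemma subSet_upward (hp : 1 < p) {a a' : ℝ} (ha : a ∈ subSet μ (phi p) ξ) (h : a ≤ a') :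
    a' ∈ subSet μ (phi p) ξ := by
  refine ⟨ha.1.trans h, fun l => (ha.2 l).trans ?_⟩
  refine ENNReal.ofReal_le_ofReal (Real.exp_le_exp.2 (phi_mono hp ?_))
  rw [abs_mul, abs_mul]
  exact mul_le_mul_of_nonneg_right
    (by rw [abs_of_nonneg ha.1, abs_of_nonneg (ha.1.trans h)]; exact h) (abs_nonneg l)

lemma tau_nonneg : 0 ≤ tau μ (phi p) ξ :=
  Real.sInf_nonneg fun _ hx => hx.1

lemma mem_subSet_of_tau_lt (hp : 1 < p) (hne : (subSet μ (phi p) ξ).Nonempty) {a : ℝ}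
    (ha : tau μ (phi p) ξ < a) : a ∈ subSet μ (phi p) ξ := by
  obtain ⟨x, hx, hxa⟩ := exists_lt_of_csInf_lt hne ha
  exact subSet_upward hp hx hxa.le

lemma subSet_neg {a : ℝ} (ha : a ∈ subSet μ (phi p) ξ) :
    a ∈ subSet μ (phi p) (fun ω => -ξ ω) := by
  refine ⟨ha.1, fun l => ?_⟩
  have := ha.2 (-l)
  simp only [neg_mul, neg_neg, mul_neg] at this ⊢
  calc ∫⁻ ω, ENNReal.ofReal (Real.exp (-(l * ξ ω))) ∂μ
      ≤ ENNReal.ofReal (Real.exp (phi p (-(a * l)))) := by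
        simpa [mul_comm] using this
    _ = ENNReal.ofReal (Real.exp (phi p (a * l))) := by
        rw [← phi_abs p (-(a*l)), abs_neg, phi_abs]

lemma markov (hξ : Measurable ξ) {a l t : ℝ} (ha : a ∈ subSet μ (phi p) ξ) (hl : 0 < l) :
    μ {ω | t ≤ ξ ω} ≤ ENNReal.ofReal (Real.exp (phi p (a*l) - l*t)) := by
  set f : Ω → ENNReal := fun ω => ENNReal.ofReal (Real.exp (l * ξ ω)) with hf
  have hfm : AEMeasurable f μ :=
    (ENNReal.measurable_ofReal.comp (Real.measurable_exp.comp (hξ.const_mul l))).aemeasurable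
  have key : ENNReal.ofReal (Real.exp (l*t)) * μ {ω | t ≤ ξ ω} ≤
      ENNReal.ofReal (Real.exp (phi p (a*l))) := by
    refine le_trans ?_
      ((mul_meas_ge_le_lintegral₀ hfm (ENNReal.ofReal (Real.exp (l*t)))).trans (ha.2 l))
    refine mul_le_mul_right (measure_mono fun ω hω => ?_) _
    exact ENNReal.ofReal_le_ofReal (Real.exp_le_exp.2 (mul_le_mul_of_nonneg_left hω hl.le))
  rw [Real.exp_sub, ENNReal.ofReal_div_of_pos (Real.exp_pos _)]
  rw [ENNReal.le_div_iff_mul_le (Or.inl (by simp [Real.exp_pos])) (Or.inl ENNReal.ofReal_ne_top)]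
  rwa [mul_comm]

end Aux

lemma summable_aux {c d : ℝ} (hc : 0 < c) (hd : 0 < d) :
    Summable (fun n : ℕ => 2 * Real.exp (1/2 - c * (n:ℝ) ^ d)) := by
  have hbig : (fun n : ℕ => 2 * Real.exp (1/2 - c * (n:ℝ) ^ d)) =O[atTop]
      (fun n : ℕ => (n:ℝ) ^ (-2 : ℝ)) := by
    have hlog := (isLittleO_log_rpow_atTop hd).bound (c := c/2) (by positivity)
    have hev : ∀ᶠ n : ℕ in atTop, ‖Real.log (n:ℝ)‖ ≤ c/2 * ‖(n:ℝ) ^ d‖ :=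
      tendsto_natCast_atTop_atTop.eventually hlog
    refine Asymptotics.IsBigO.of_bound (2 * Real.exp (1/2)) ?_
    filter_upwards [hev, eventually_ge_atTop 1] with n hn hn1
    have hnpos : (0:ℝ) < n := by exact_mod_cast hn1
    have hd0 : (0:ℝ) ≤ (n:ℝ) ^ d := Real.rpow_nonneg hnpos.le d
    have hlogn : Real.log (n:ℝ) ≤ c/2 * (n:ℝ) ^ d := by
      rw [Real.norm_eq_abs, Real.norm_eq_abs, abs_of_nonneg hd0] at hn
      exact (le_abs_self _).trans hn
    have h2 : Real.exp (-(c * (n:ℝ)^d)) ≤ (n:ℝ) ^ (-2 : ℝ) := by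
      rw [show ((n:ℝ) ^ (-2:ℝ)) = Real.exp (Real.log n * (-2)) from
        Real.rpow_def_of_pos hnpos _]
      apply Real.exp_le_exp.2
      nlinarith
    rw [Real.norm_eq_abs, Real.norm_eq_abs, abs_of_nonneg (by positivity),
      abs_of_nonneg (Real.rpow_nonneg hnpos.le _)]
    rw [sub_eq_add_neg, Real.exp_add]
    calc 2 * (Real.exp (1/2) * Real.exp (-(c * (n:ℝ)^d)))
        ≤ 2 * (Real.exp (1/2) * ((n:ℝ) ^ (-2:ℝ))) := by
          have := Real.exp_pos (1/2 : ℝ)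
          nlinarith [Real.exp_pos (-(c * (n:ℝ)^d))]
      _ = 2 * Real.exp (1/2) * ((n:ℝ) ^ (-2:ℝ)) := by ring
  exact summable_of_isBigO_nat (Real.summable_nat_rpow.2 (by norm_num)) hbig

/-- Marcinkiewicz–Zygmund type SLLN: for `p > 1` and `r = min{p,2}`, if `(ξ_n)` is a
bounded sequence of `φ_p`-subgaussian random variables (`sup_n τ_{φ_p}(ξ_n) < ∞`) and
`τ_{φ_p}(∑_{i=1}^n ξ_i)^r ≤ ∑_{i=1}^n τ_{φ_p}(ξ_i)^r` for all `n`, then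
`n^{-1/s} ∑_{i=1}^n ξ_i → 0` almost surely for every `0 < s < r`. -/
theorem marcinkiewicz_zygmund_slln
    {Ω : Type*} [MeasurableSpace Ω] (μ : Measure Ω) [IsProbabilityMeasure μ]
    (p : ℝ) (hp : 1 < p) (r : ℝ) (hr : r = min p 2)
    (ξ : ℕ → Ω → ℝ) (hmeas : ∀ n, Measurable (ξ n))
    (hsub : ∀ n, (subSet μ (phi p) (ξ n)).Nonempty)
    (hbdd : ∃ b : ℝ, ∀ n : ℕ, 1 ≤ n → tau μ (phi p) (ξ n) ≤ b)
    (hsubsum : ∀ n : ℕ, 1 ≤ n →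
      (subSet μ (phi p) (fun ω => ∑ i ∈ Finset.Icc 1 n, ξ i ω)).Nonempty)
    (hτ : ∀ n : ℕ, 1 ≤ n →
      tau μ (phi p) (fun ω => ∑ i ∈ Finset.Icc 1 n, ξ i ω) ^ r ≤
        ∑ i ∈ Finset.Icc 1 n, tau μ (phi p) (ξ i) ^ r)
    (s : ℝ) (hs0 : 0 < s) (hsr : s < r) :
    ∀ᵐ ω ∂μ, Tendsto (fun n : ℕ => (n : ℝ) ^ (-(1 / s)) * ∑ i ∈ Finset.Icc 1 n, ξ i ω)
      atTop (nhds 0) := by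
  have hr1 : 1 < r := by rw [hr]; exact lt_min hp one_lt_two
  have hr0 : 0 < r := by linarith
  have hδ : 0 < 1/s - 1/r := by
    have := one_div_lt_one_div_of_lt hs0 hsr
    linarith
  obtain ⟨b0, hb0⟩ := hbdd
  set b : ℝ := max b0 0 with hbdef
  have hbnn : 0 ≤ b := le_max_right _ _
  have hb : ∀ i : ℕ, 1 ≤ i → tau μ (phi p) (ξ i) ≤ b :=
    fun i hi => (hb0 i hi).trans (le_max_left _ _)
  have hSmeas : ∀ n : ℕ, Measurable (fun ω => ∑ i ∈ Finset.Icc 1 n, ξ i ω) :=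
    fun n => Finset.measurable_sum _ (fun i _ => hmeas i)
  -- the key tail summability estimate
  have htail : ∀ ε : ℝ, 0 < ε →
      (∑' n : ℕ, μ {ω | ε * (n:ℝ) ^ (1/s) ≤ |∑ i ∈ Finset.Icc 1 n, ξ i ω|}) ≠ ⊤ := by
    intro ε hε
    set c : ℝ := ε / (b + 1) with hcdef
    have hc : 0 < c := by positivity
    have hbound : ∀ n : ℕ,
        μ {ω | ε * (n:ℝ) ^ (1/s) ≤ |∑ i ∈ Finset.Icc 1 n, ξ i ω|} ≤
          ENNReal.ofReal (2 * Real.exp (1/2 - c * (n:ℝ) ^ (1/s - 1/r))) := by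
      intro n
      rcases Nat.eq_zero_or_pos n with hn0 | hn1
      · subst hn0
        refine le_trans prob_le_one ?_
        rw [Nat.cast_zero, Real.zero_rpow hδ.ne', mul_zero, sub_zero,
          ENNReal.one_le_ofReal]
        nlinarith [Real.one_le_exp (by norm_num : (0:ℝ) ≤ 1/2)]
      · have hn1' : (1:ℕ) ≤ n := hn1
        have hnpos : (0:ℝ) < n := by exact_mod_cast hn1
        set S : Ω → ℝ := fun ω => ∑ i ∈ Finset.Icc 1 n, ξ i ω with hSdef
        set τn : ℝ := tau μ (phi p) S with hτdef
        have hτnn : 0 ≤ τn := tau_nonneg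
        -- τn ≤ b * n^(1/r)
        have hτb : τn ≤ b * (n:ℝ) ^ (1/r) := by
          have h1 : τn ^ r ≤ (n:ℝ) * b ^ r := by
            refine (hτ n hn1').trans ?_
            calc ∑ i ∈ Finset.Icc 1 n, tau μ (phi p) (ξ i) ^ r
                ≤ ∑ _i ∈ Finset.Icc 1 n, b ^ r := by
                  refine Finset.sum_le_sum fun i hi => ?_
                  exact Real.rpow_le_rpow tau_nonneg (hb i (Finset.mem_Icc.1 hi).1) hr0.le
              _ = (n:ℝ) * b ^ r := by
                  rw [Finset.sum_const, Nat.card_Icc, nsmul_eq_mul]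
                  norm_num
          have h2 : τn = (τn ^ r) ^ (1/r) := by
            rw [← Real.rpow_mul hτnn, mul_one_div_cancel hr0.ne', Real.rpow_one]
          rw [h2]
          calc (τn ^ r) ^ (1/r) ≤ ((n:ℝ) * b ^ r) ^ (1/r) :=
              Real.rpow_le_rpow (Real.rpow_nonneg hτnn _) h1 (by positivity)
            _ = (n:ℝ) ^ (1/r) * (b ^ r) ^ (1/r) :=
              Real.mul_rpow hnpos.le (Real.rpow_nonneg hbnn _)
            _ = b * (n:ℝ) ^ (1/r) := by
              rw [← Real.rpow_mul hbnn, mul_one_div_cancel hr0.ne', Real.rpow_one, mul_comm]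
        obtain ⟨a, hadef⟩ : ∃ a : ℝ, a = b * (n:ℝ) ^ (1/r) + 1 := ⟨_, rfl⟩
        have hnr1 : (1:ℝ) ≤ (n:ℝ) ^ (1/r) := Real.one_le_rpow (by exact_mod_cast hn1) (by positivity)
        have hprod : (0:ℝ) ≤ b * (n:ℝ) ^ (1/r) := mul_nonneg hbnn (by positivity)
        have hapos : 0 < a := by rw [hadef]; linarith
        have haS : a ∈ subSet μ (phi p) S :=
          mem_subSet_of_tau_lt hp (hsubsum n hn1') (by rw [← hτdef]; linarith)
        have hl : (0:ℝ) < 1/a := by positivity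
        have hal : a * (1/a) = 1 := mul_one_div_cancel hapos.ne'
        set t : ℝ := ε * (n:ℝ) ^ (1/s) with htdef
        have ht0 : 0 ≤ t := by positivity
        have hup : μ {ω | t ≤ S ω} ≤ ENNReal.ofReal (Real.exp (1/2 - (1/a) * t)) := by
          have := markov (t := t) (hSmeas n) haS hl
          rwa [hal, phi_one] at this
        have hdn : μ {ω | t ≤ -S ω} ≤ ENNReal.ofReal (Real.exp (1/2 - (1/a) * t)) := by
          have := markov (t := t) (μ := μ) (ξ := fun ω => -S ω) (hSmeas n).neg (subSet_neg haS) hl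
          rwa [hal, phi_one] at this
        have hsubun : {ω | t ≤ |S ω|} ⊆ {ω | t ≤ S ω} ∪ {ω | t ≤ -S ω} := by
          intro ω hω
          simp only [Set.mem_setOf_eq] at hω
          rcases le_abs.1 hω with h | h
          · exact Or.inl h
          · exact Or.inr h
        have hta : c * (n:ℝ) ^ (1/s - 1/r) ≤ (1/a) * t := by
          have haub : a ≤ (b+1) * (n:ℝ) ^ (1/r) := by rw [hadef]; nlinarith
          have h1 : (1:ℝ)/((b+1) * (n:ℝ) ^ (1/r)) ≤ 1/a :=
            one_div_le_one_div_of_le hapos haub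
          have h2 : c * (n:ℝ) ^ (1/s - 1/r) = (1/((b+1) * (n:ℝ) ^ (1/r))) * t := by
            rw [htdef, hcdef, Real.rpow_sub hnpos]
            field_simp
          rw [h2]
          exact mul_le_mul_of_nonneg_right h1 ht0
        calc μ {ω | t ≤ |S ω|}
            ≤ μ ({ω | t ≤ S ω} ∪ {ω | t ≤ -S ω}) := measure_mono hsubun
          _ ≤ μ {ω | t ≤ S ω} + μ {ω | t ≤ -S ω} := measure_union_le _ _
          _ ≤ ENNReal.ofReal (Real.exp (1/2 - (1/a) * t)) +
              ENNReal.ofReal (Real.exp (1/2 - (1/a) * t)) := add_le_add hup hdn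
          _ = ENNReal.ofReal (2 * Real.exp (1/2 - (1/a) * t)) := by
              rw [two_mul, ENNReal.ofReal_add (Real.exp_nonneg _) (Real.exp_nonneg _)]
          _ ≤ ENNReal.ofReal (2 * Real.exp (1/2 - c * (n:ℝ) ^ (1/s - 1/r))) := by
              refine ENNReal.ofReal_le_ofReal ?_
              have := Real.exp_le_exp.2 (by linarith : 1/2 - (1/a) * t ≤
                1/2 - c * (n:ℝ) ^ (1/s - 1/r))
              linarith
    have hsum := summable_aux hc hδ
    have heq : (∑' n : ℕ, ENNReal.ofReal (2 * Real.exp (1/2 - c * (n:ℝ) ^ (1/s - 1/r)))) ≠ ⊤ := by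
      rw [← ENNReal.ofReal_tsum_of_nonneg (fun n => by positivity) hsum]
      exact ENNReal.ofReal_ne_top
    exact ne_top_of_le_ne_top heq (ENNReal.tsum_le_tsum hbound)
  -- Borel–Cantelli for each ε = 1/(k+1)
  have hBC : ∀ᵐ ω ∂μ, ∀ k : ℕ, ∀ᶠ n : ℕ in atTop,
      ω ∉ {ω | (1/((k:ℝ)+1)) * (n:ℝ) ^ (1/s) ≤ |∑ i ∈ Finset.Icc 1 n, ξ i ω|} := by
    rw [ae_all_iff]
    intro k
    exact ae_eventually_notMem (htail (1/((k:ℝ)+1)) (by positivity))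
  filter_upwards [hBC] with ω hω
  rw [NormedAddCommGroup.tendsto_nhds_zero]
  intro ε hε
  obtain ⟨k, hk⟩ := exists_nat_one_div_lt hε
  filter_upwards [hω k, eventually_ge_atTop 1] with n hn hn1
  have hnpos : (0:ℝ) < n := by exact_mod_cast hn1
  have hlt : |∑ i ∈ Finset.Icc 1 n, ξ i ω| < (1/((k:ℝ)+1)) * (n:ℝ) ^ (1/s) := not_le.1 hn
  have hrp : (0:ℝ) < (n:ℝ) ^ (-(1/s)) := Real.rpow_pos_of_pos hnpos _
  have hcancel : (n:ℝ) ^ (-(1/s)) * (n:ℝ) ^ (1/s) = 1 := by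
    rw [← Real.rpow_add hnpos]; norm_num
  calc ‖(n:ℝ) ^ (-(1/s)) * ∑ i ∈ Finset.Icc 1 n, ξ i ω‖
      = (n:ℝ) ^ (-(1/s)) * |∑ i ∈ Finset.Icc 1 n, ξ i ω| := by
        rw [Real.norm_eq_abs, abs_mul, abs_of_nonneg hrp.le]
    _ < (n:ℝ) ^ (-(1/s)) * ((1/((k:ℝ)+1)) * (n:ℝ) ^ (1/s)) :=
        mul_lt_mul_of_pos_left hlt hrp
    _ = 1/((k:ℝ)+1) := by
        rw [mul_comm (1/((k:ℝ)+1)) _, ← mul_assoc, hcancel, one_mul]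
    _ < ε := hk
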